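/- Let k be an algebraically closed field and let g, h ∈ k[x] be coprime polynomials with h·g′ − g·h′ ≠ 0. Let c ∈ k be a point with h(c) ≠ 0, and set v = g(c)/h(c) ∈ k. Let B be the localization of k[x] at the maximal ideal (x − c), let A be the localization of k[y] at the maximal ideal (y − v), and give B the A-algebra structure induced by the ring homomorphism k[y] → B sending y to the element g/h (which lies in B since h is invertible in B). Then the length of the module of Kähler differentials Ω_{B/A} as a B-module equals the multiplicity of c as a root of the polynomial h·g′ − g·h′. -/

import Mathlib

open Polynomial

/-- Let `g, h` be coprime polynomials over an algebraically closed field `k` with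
`h·g′ − g·h′ ≠ 0`, and let `c ∈ k` with `h(c) ≠ 0`; set `v = g(c)/h(c)`.  Let `B` be
the localization of `k[x]` at `(x − c)`, let `A` be the localization of `k[y]` at
`(y − v)`, and give `B` the `A`-algebra structure induced by the `k`-algebra map
`k[y] → B` sending `y` to `g/h` (i.e. to the element `b ∈ B` with `h·b = g`).  Then the
length of `Ω_{B/A}` as a `B`-module (expressed via a composition series from `⊥` to
`⊤`) equals the multiplicity of `c` as a root of `h·g′ − g·h′`. -/
theorem differential_length_eq_discriminant_multiplicity
    (k : Type*) [Field k] [IsAlgClosed k]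
    (g h : k[X]) (hgh : IsCoprime g h)
    (hΔ : h * derivative g - g * derivative h ≠ 0)
    (c : k) (hc : h.eval c ≠ 0)
    (B : Type*) [CommRing B] [Algebra k[X] B]
    [hPc : (Ideal.span {(X : k[X]) - C c}).IsPrime]
    [IsLocalization.AtPrime B (Ideal.span {(X : k[X]) - C c})]
    (A : Type*) [CommRing A] [Algebra k[X] A]
    [hPv : (Ideal.span {(X : k[X]) - C (g.eval c / h.eval c)}).IsPrime]
    [IsLocalization.AtPrime A (Ideal.span {(X : k[X]) - C (g.eval c / h.eval c)})]
    (b : B) (hb : algebraMap k[X] B h * b = algebraMap k[X] B g)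
    [Algebra A B]
    (hAB : ∀ q : k[X], algebraMap A B (algebraMap k[X] A q)
        = Polynomial.eval₂ ((algebraMap k[X] B).comp (Polynomial.C : k →+* k[X])) b q) :
    ∃ s : CompositionSeries (Submodule B (KaehlerDifferential A B)),
      s.head = ⊥ ∧ s.last = ⊤ ∧
      s.length = rootMultiplicity c (h * derivative g - g * derivative h) := by
  classical
  set Δ : k[X] := h * derivative g - g * derivative h with hΔdef
  set n : ℕ := rootMultiplicity c Δ with hndef
  set P : Ideal k[X] := Ideal.span {(X : k[X]) - C c} with hPdef
  set Pv : Ideal k[X] := Ideal.span {(X : k[X]) - C (g.eval c / h.eval c)} with hPvdef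
  -- membership in the prime complements
  have hmemP : ∀ s : k[X], s ∈ P.primeCompl ↔ s.eval c ≠ 0 := by
    intro s
    show s ∉ P ↔ _
    rw [hPdef, Ideal.mem_span_singleton]
    rw [Polynomial.dvd_iff_isRoot]
    exact not_congr Iff.rfl
  have hmemPv : ∀ s : k[X], s ∈ Pv.primeCompl ↔ s.eval (g.eval c / h.eval c) ≠ 0 := by
    intro s
    show s ∉ Pv ↔ _
    rw [hPvdef, Ideal.mem_span_singleton, Polynomial.dvd_iff_isRoot]
    exact not_congr Iff.rfl
  -- basic structure of B
  have hle : P.primeCompl ≤ nonZeroDivisors k[X] := by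
    intro s hs
    refine mem_nonZeroDivisors_of_ne_zero fun h0 => ?_
    rw [hmemP] at hs
    rw [h0] at hs
    simp at hs
  have hinj : Function.Injective (algebraMap k[X] B) :=
    IsLocalization.injective B hle
  haveI : IsDomain B := IsLocalization.isDomain_of_le_nonZeroDivisors (R := k[X]) (M := P.primeCompl) (S := B) hle
  have hu : ∀ s : k[X], s.eval c ≠ 0 → IsUnit (algebraMap k[X] B s) := by
    intro s hs
    exact IsLocalization.map_units B (⟨s, (hmemP s).mpr hs⟩ : P.primeCompl)
  -- the evaluation map ev : B → k
  have hevu : ∀ y : P.primeCompl, IsUnit (Polynomial.evalRingHom c (y : k[X])) := by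
    intro y
    exact isUnit_iff_ne_zero.mpr ((hmemP _).mp y.2)
  let ev : B →+* k := IsLocalization.lift hevu
  have hev : ∀ p : k[X], ev (algebraMap k[X] B p) = p.eval c := by
    intro p
    exact IsLocalization.lift_eq hevu p
  -- representing elements of B as fractions
  have rep : ∀ z : B, ∃ p s : k[X], s.eval c ≠ 0 ∧ z * algebraMap k[X] B s = algebraMap k[X] B p := by
    intro z
    obtain ⟨⟨p, s⟩, hz⟩ := IsLocalization.surj (M := P.primeCompl) z
    exact ⟨p, s, (hmemP _).mp s.2, hz⟩
  -- kernel of ev is the span of π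
  have hker : ∀ z : B, ev z = 0 → z ∈ Ideal.span {algebraMap k[X] B ((X : k[X]) - C c)} := by
    intro z hz
    obtain ⟨p, s, hs, hzs⟩ := rep z
    have h1 : s.eval c * ev z = p.eval c := by
      have := congrArg ev hzs
      rw [map_mul, hev, hev] at this
      linear_combination this
    rw [hz, mul_zero] at h1
    obtain ⟨q, hq⟩ := Polynomial.dvd_iff_isRoot.mpr h1.symm
    obtain ⟨su, hsu⟩ := hu s hs
    rw [Ideal.mem_span_singleton]
    refine ⟨algebraMap k[X] B q * ↑su⁻¹, ?_⟩
    have : z * ↑su = algebraMap k[X] B ((X - C c) * q) := by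
      rw [hsu, hzs, hq]
    calc z = z * ↑su * ↑su⁻¹ := by rw [mul_assoc, Units.mul_inv, mul_one]
      _ = algebraMap k[X] B ((X - C c) * q) * ↑su⁻¹ := by rw [this]
      _ = algebraMap k[X] B (X - C c) * (algebraMap k[X] B q * ↑su⁻¹) := by
          rw [map_mul]; ring
  -- elements with nonzero ev are units
  have hunit' : ∀ z : B, ev z ≠ 0 → IsUnit z := by
    intro z hz
    obtain ⟨p, s, hs, hzs⟩ := rep z
    have h1 : s.eval c * ev z = p.eval c := by
      have := congrArg ev hzs
      rw [map_mul, hev, hev] at this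
      linear_combination this
    have hp : p.eval c ≠ 0 := by
      rw [← h1]
      exact mul_ne_zero hs hz
    have : IsUnit (z * algebraMap k[X] B s) := hzs ▸ hu p hp
    exact isUnit_of_mul_isUnit_left this
  -- the derivative function on B
  have DexU : ∀ z : B, ∃ w : B, ∀ p s : k[X], s.eval c ≠ 0 → z * algebraMap k[X] B s = algebraMap k[X] B p →
      algebraMap k[X] B s ^ 2 * w = algebraMap k[X] B (s * derivative p - p * derivative s) := by
    intro z
    obtain ⟨p₀, s₀, hs₀, h₀⟩ := rep z
    obtain ⟨u₀, hu₀⟩ := (hu s₀ hs₀).pow 2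
    refine ⟨↑u₀⁻¹ * algebraMap k[X] B (s₀ * derivative p₀ - p₀ * derivative s₀), ?_⟩
    intro p s hs hps
    have hs₀ne : s₀ ≠ 0 := fun h0 => hs₀ (by rw [h0]; simp)
    have e : p₀ * s = p * s₀ := by
      apply hinj
      rw [map_mul, map_mul, ← h₀, ← hps]
      ring
    have ed := congrArg derivative e
    rw [derivative_mul, derivative_mul] at ed
    have key : s ^ 2 * (s₀ * derivative p₀ - p₀ * derivative s₀)
        = s₀ ^ 2 * (s * derivative p - p * derivative s) := by
      linear_combination (s * s₀) * ed - (derivative s₀ * s + derivative s * s₀) * e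
    apply mul_left_cancel₀ (a := algebraMap k[X] B s₀ ^ 2)
      (pow_ne_zero 2 (fun h0 => hs₀ (by rw [hinj (h0.trans (map_zero _).symm)]; simp)))
    calc algebraMap k[X] B s₀ ^ 2 * (algebraMap k[X] B s ^ 2 *
          (↑u₀⁻¹ * algebraMap k[X] B (s₀ * derivative p₀ - p₀ * derivative s₀)))
        = algebraMap k[X] B s ^ 2 * ((↑u₀ * ↑u₀⁻¹) *
            algebraMap k[X] B (s₀ * derivative p₀ - p₀ * derivative s₀)) := by
          rw [← hu₀]; ring
      _ = algebraMap k[X] B (s ^ 2 * (s₀ * derivative p₀ - p₀ * derivative s₀)) := by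
          rw [Units.mul_inv, one_mul, map_mul, map_pow]
      _ = algebraMap k[X] B (s₀ ^ 2 * (s * derivative p - p * derivative s)) := by rw [key]
      _ = algebraMap k[X] B s₀ ^ 2 * algebraMap k[X] B (s * derivative p - p * derivative s) := by
          rw [map_mul, map_pow]
  let Dv : B → B := fun z => (DexU z).choose
  have Dspec : ∀ (z : B) (p s : k[X]), s.eval c ≠ 0 → z * algebraMap k[X] B s = algebraMap k[X] B p →
      algebraMap k[X] B s ^ 2 * Dv z = algebraMap k[X] B (s * derivative p - p * derivative s) :=
    fun z => (DexU z).choose_spec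
  have hιne : ∀ s : k[X], s.eval c ≠ 0 → algebraMap k[X] B s ≠ 0 := by
    intro s hs h0
    exact hs (by rw [hinj (h0.trans (map_zero _).symm)]; simp)
  have Dmap : ∀ p : k[X], Dv (algebraMap k[X] B p) = algebraMap k[X] B (derivative p) := by
    intro p
    have := Dspec (algebraMap k[X] B p) p 1 (by simp) (by simp)
    simpa using this
  have Dadd : ∀ z₁ z₂ : B, Dv (z₁ + z₂) = Dv z₁ + Dv z₂ := by
    intro z₁ z₂
    obtain ⟨p₁, s₁, hs₁, h₁⟩ := rep z₁
    obtain ⟨p₂, s₂, hs₂, h₂⟩ := rep z₂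
    have h12 : (z₁ + z₂) * algebraMap k[X] B (s₁ * s₂) = algebraMap k[X] B (p₁ * s₂ + p₂ * s₁) := by
      rw [map_mul, map_add, map_mul, map_mul, ← h₁, ← h₂]
      ring
    have hA := Dspec (z₁ + z₂) _ _ (by simp [mul_ne_zero hs₁ hs₂]) h12
    have hB₁ := Dspec z₁ p₁ s₁ hs₁ h₁
    have hB₂ := Dspec z₂ p₂ s₂ hs₂ h₂
    apply mul_left_cancel₀ (a := algebraMap k[X] B (s₁ * s₂) ^ 2)
      (pow_ne_zero 2 (hιne _ (by simp [mul_ne_zero hs₁ hs₂])))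
    simp only [derivative_mul, derivative_add] at hA hB₁ hB₂
    simp only [map_mul, map_add, map_sub, map_pow] at hA hB₁ hB₂ ⊢
    linear_combination hA - (algebraMap k[X] B s₂) ^ 2 * hB₁ - (algebraMap k[X] B s₁) ^ 2 * hB₂
  have Dmul : ∀ z₁ z₂ : B, Dv (z₁ * z₂) = z₁ * Dv z₂ + z₂ * Dv z₁ := by
    intro z₁ z₂
    obtain ⟨p₁, s₁, hs₁, h₁⟩ := rep z₁
    obtain ⟨p₂, s₂, hs₂, h₂⟩ := rep z₂
    have h12 : (z₁ * z₂) * algebraMap k[X] B (s₁ * s₂) = algebraMap k[X] B (p₁ * p₂) := by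
      rw [map_mul, map_mul, ← h₁, ← h₂]
      ring
    have hA := Dspec (z₁ * z₂) _ _ (by simp [mul_ne_zero hs₁ hs₂]) h12
    have hB₁ := Dspec z₁ p₁ s₁ hs₁ h₁
    have hB₂ := Dspec z₂ p₂ s₂ hs₂ h₂
    apply mul_left_cancel₀ (a := algebraMap k[X] B (s₁ * s₂) ^ 3)
      (pow_ne_zero 3 (hιne _ (by simp [mul_ne_zero hs₁ hs₂])))
    simp only [derivative_mul, derivative_add] at hA hB₁ hB₂
    simp only [map_mul, map_add, map_sub, map_pow] at hA hB₁ hB₂ ⊢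
    linear_combination (algebraMap k[X] B s₁ * algebraMap k[X] B s₂) * hA
      - (algebraMap k[X] B s₁) ^ 2 * (algebraMap k[X] B s₂) ^ 3 * Dv z₂ * h₁
      - (algebraMap k[X] B s₁) ^ 3 * (algebraMap k[X] B s₂) ^ 2 * Dv z₁ * h₂
      - (algebraMap k[X] B s₁) ^ 2 * (algebraMap k[X] B s₂) * (algebraMap k[X] B p₁) * hB₂
      - (algebraMap k[X] B s₁) * (algebraMap k[X] B s₂) ^ 2 * (algebraMap k[X] B p₂) * hB₁
  -- chain rule helper
  have chain : ∀ (N : Type u_2) (iN : AddCommGroup N) (iM : @Module B N _ iN.toAddCommMonoid) (f : B → N),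
      (∀ u v, f (u + v) = f u + f v) →
      (∀ u v, f (u * v) = u • f v + v • f u) →
      (∀ a : k, f (algebraMap k[X] B (C a)) = 0) →
      ∀ (w : B) (t : k[X]),
        f (Polynomial.eval₂ ((algebraMap k[X] B).comp (C : k →+* k[X])) w t)
          = Polynomial.eval₂ ((algebraMap k[X] B).comp (C : k →+* k[X])) w (derivative t) • f w := by
    intro N iN iM f hadd hmul hC w t
    have f0 : f 0 = 0 := by
      have := hadd 0 0
      rw [add_zero] at this
      exact (left_eq_add.mp this)
    induction t using Polynomial.induction_on with
    | C a =>
        rw [eval₂_C, derivative_C, eval₂_zero, zero_smul]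
        exact hC a
    | add p q hp hq =>
        rw [eval₂_add, hadd, hp, hq, derivative_add, eval₂_add, add_smul]
    | monomial m a hm =>
        have hx : (C a * X ^ (m + 1) : k[X]) = (C a * X ^ m) * X := by ring
        rw [hx, eval₂_mul, eval₂_X, hmul, hm]
        have sc : Polynomial.eval₂ ((algebraMap k[X] B).comp (C : k →+* k[X])) w (C a * X ^ m)
            + w * Polynomial.eval₂ ((algebraMap k[X] B).comp (C : k →+* k[X])) w (derivative (C a * X ^ m))
            = Polynomial.eval₂ ((algebraMap k[X] B).comp (C : k →+* k[X])) w (derivative ((C a * X ^ m) * X)) := by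
          rw [← hx, derivative_C_mul_X_pow, derivative_C_mul_X_pow]
          rcases m with _ | m'
          · simp
          · simp only [eval₂_mul, eval₂_C, eval₂_X_pow, Nat.add_sub_cancel]
            have hcast : (a * ((m' + 1 + 1 : ℕ) : k)) = a + a * ((m' + 1 : ℕ) : k) := by
              push_cast
              ring
            rw [hcast, map_add]
            ring
        rw [← sc]
        rw [smul_smul, ← add_smul]
  -- the element δ in B
  set δb : B := algebraMap k[X] B Δ with hδbdef
  set J : Submodule B B := Ideal.span {δb} with hJdef
  -- D b lands in J
  have hhu : IsUnit (algebraMap k[X] B h) := hu h hc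
  have DbJ : Dv b ∈ J := by
    have h1 := Dmul (algebraMap k[X] B h) b
    rw [hb, Dmap, Dmap] at h1
    -- h1 : ι (derivative g) = ι h * Dv b + b * ι (derivative h)
    have h2 : algebraMap k[X] B h ^ 2 * Dv b = δb := by
      rw [hδbdef, hΔdef, map_sub, map_mul, map_mul]
      linear_combination (-(algebraMap k[X] B h)) * h1 - algebraMap k[X] B (derivative h) * hb
    obtain ⟨hu2, hhu2⟩ := hhu.pow 2
    rw [hJdef, Ideal.mem_span_singleton]
    refine ⟨(↑hu2⁻¹ : B), ?_⟩
    rw [← h2, ← hhu2]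
    calc Dv b = Dv b * (↑hu2 * ↑hu2⁻¹) := by rw [Units.mul_inv, mul_one]
      _ = ↑hu2 * Dv b * ↑hu2⁻¹ := by ring
  -- chain rule for Dv at b
  have F1 : ∀ t : k[X], Dv (Polynomial.eval₂ ((algebraMap k[X] B).comp (C : k →+* k[X])) b t)
      = Polynomial.eval₂ ((algebraMap k[X] B).comp (C : k →+* k[X])) b (derivative t) * Dv b := by
    intro t
    have := chain B inferInstance inferInstance Dv Dadd
      (fun u v => by rw [smul_eq_mul, smul_eq_mul]; exact Dmul u v)
      (fun a => by rw [Dmap, derivative_C, map_zero]) b t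
    rwa [smul_eq_mul] at this
  -- value of ev at b
  have hvb : ev b = g.eval c / h.eval c := by
    have h1 := congrArg ev hb
    rw [map_mul, hev, hev] at h1
    field_simp
    linear_combination h1
  -- units coming from Pv.primeCompl
  have hcomp : ev.comp ((algebraMap k[X] B).comp (C : k →+* k[X])) = RingHom.id k := by
    ext a
    simp only [RingHom.comp_apply, RingHom.id_apply]
    rw [hev, eval_C]
  have hEunit : ∀ s : k[X], s ∈ Pv.primeCompl →
      IsUnit (Polynomial.eval₂ ((algebraMap k[X] B).comp (C : k →+* k[X])) b s) := by
    intro s hs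
    apply hunit'
    rw [Polynomial.hom_eval₂, hcomp, hvb]
    have hid : Polynomial.eval₂ (RingHom.id k) (g.eval c / h.eval c) s
        = Polynomial.eval (g.eval c / h.eval c) s := rfl
    rw [hid]
    exact (hmemPv s).mp hs
  -- Dv of elements coming from A lands in J
  have hmemJ : ∀ t : k[X], Dv (Polynomial.eval₂ ((algebraMap k[X] B).comp (C : k →+* k[X])) b t) ∈ J := by
    intro t
    rw [F1]
    exact Ideal.mul_mem_left _ _ DbJ
  have DalgJ : ∀ a : A, Dv (algebraMap A B a) ∈ J := by
    intro a
    obtain ⟨⟨q, s⟩, hqs⟩ := IsLocalization.surj (M := Pv.primeCompl) a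
    have h2 := congrArg (algebraMap A B) hqs
    rw [map_mul, hAB, hAB] at h2
    have h3 := Dmul (algebraMap A B a) (Polynomial.eval₂ ((algebraMap k[X] B).comp (C : k →+* k[X])) b ↑s)
    rw [h2] at h3
    obtain ⟨su, hsu⟩ := hEunit ↑s s.2
    have h4 : Dv (algebraMap A B a)
        = ↑su⁻¹ * (Polynomial.eval₂ ((algebraMap k[X] B).comp (C : k →+* k[X])) b ↑s
            * Dv (algebraMap A B a)) := by
      rw [← hsu]
      calc Dv (algebraMap A B a) = (↑su⁻¹ * ↑su) * Dv (algebraMap A B a) := by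
            rw [Units.inv_mul, one_mul]
        _ = ↑su⁻¹ * (↑su * Dv (algebraMap A B a)) := by ring
    rw [h4]
    refine Ideal.mul_mem_left _ _ ?_
    have h5 : Polynomial.eval₂ ((algebraMap k[X] B).comp (C : k →+* k[X])) b ↑s
          * Dv (algebraMap A B a)
        = Dv (Polynomial.eval₂ ((algebraMap k[X] B).comp (C : k →+* k[X])) b q)
          - algebraMap A B a
            * Dv (Polynomial.eval₂ ((algebraMap k[X] B).comp (C : k →+* k[X])) b ↑s) := by
      linear_combination -h3
    rw [h5]
    exact Submodule.sub_mem _ (hmemJ q) (Ideal.mul_mem_left _ _ (hmemJ ↑s))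
  -- the induced derivation over A into B / J
  let DBA : Derivation A B (B ⧸ J) :=
    { toFun := fun z => J.mkQ (Dv z)
      map_add' := fun z₁ z₂ => by
        show J.mkQ (Dv (z₁ + z₂)) = J.mkQ (Dv z₁) + J.mkQ (Dv z₂)
        rw [Dadd, map_add]
      map_smul' := fun a z => by
        show J.mkQ (Dv (a • z)) = a • J.mkQ (Dv z)
        rw [Algebra.smul_def, Dmul, map_add]
        have hz0 : J.mkQ (z * Dv (algebraMap A B a)) = 0 := by
          rw [Submodule.mkQ_apply, Submodule.Quotient.mk_eq_zero]
          exact Ideal.mul_mem_left _ _ (DalgJ a)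
        rw [hz0, add_zero, Submodule.mkQ_apply, Submodule.mkQ_apply,
          ← Submodule.Quotient.mk_smul, Algebra.smul_def]
      map_one_eq_zero' := by
        show J.mkQ (Dv 1) = 0
        rw [show (1 : B) = algebraMap k[X] B 1 from (map_one _).symm, Dmap, derivative_one,
          map_zero, map_zero]
      leibniz' := fun z₁ z₂ => by
        show J.mkQ (Dv (z₁ * z₂)) = z₁ • J.mkQ (Dv z₂) + z₂ • J.mkQ (Dv z₁)
        rw [Dmul, map_add, ← map_smul, ← map_smul, smul_eq_mul, smul_eq_mul] }
  -- the universal derivation of B over A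
  set dd : Derivation A B (KaehlerDifferential A B) := KaehlerDifferential.D A B with hdddef
  set xh : B := algebraMap k[X] B X with hxhdef
  have dconst : ∀ a : k, dd (algebraMap k[X] B (C a)) = 0 := by
    intro a
    have h1 := hAB (C a)
    rw [eval₂_C, RingHom.comp_apply] at h1
    rw [← h1, Derivation.map_algebraMap]
  have hEx : ∀ t : k[X],
      Polynomial.eval₂ ((algebraMap k[X] B).comp (C : k →+* k[X])) xh t = algebraMap k[X] B t := by
    intro t
    conv_rhs => rw [← Polynomial.eval₂_C_X (p := t)]
    rw [Polynomial.hom_eval₂, hxhdef]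
  have dP : ∀ t : k[X], dd (algebraMap k[X] B t) = algebraMap k[X] B (derivative t) • dd xh := by
    intro t
    have := chain (KaehlerDifferential A B) inferInstance inferInstance (⇑dd)
      (map_add dd) (fun u v => dd.leibniz u v) dconst xh t
    rwa [hEx, hEx] at this
  have db0 : dd b = 0 := by
    have h1 := hAB X
    rw [eval₂_X] at h1
    rw [← h1, Derivation.map_algebraMap]
  have drel : δb • dd xh = 0 := by
    have h1 := congrArg dd hb
    rw [Derivation.leibniz, db0, smul_zero, zero_add, dP h, dP g] at h1
    -- h1 : b • (ι h' • dd xh) = ι g' • dd xh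
    have h2 : (algebraMap k[X] B h * algebraMap k[X] B (derivative g)) • dd xh
        = (algebraMap k[X] B g * algebraMap k[X] B (derivative h)) • dd xh := by
      calc (algebraMap k[X] B h * algebraMap k[X] B (derivative g)) • dd xh
          = algebraMap k[X] B h • (algebraMap k[X] B (derivative g) • dd xh) := mul_smul _ _ _
        _ = algebraMap k[X] B h • (b • (algebraMap k[X] B (derivative h) • dd xh)) := by rw [h1]
        _ = (algebraMap k[X] B h * b) • (algebraMap k[X] B (derivative h) • dd xh) :=
            (mul_smul _ _ _).symm
        _ = algebraMap k[X] B g • (algebraMap k[X] B (derivative h) • dd xh) := by rw [hb]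
        _ = (algebraMap k[X] B g * algebraMap k[X] B (derivative h)) • dd xh :=
            (mul_smul _ _ _).symm
    rw [hδbdef, hΔdef, map_sub, map_mul, map_mul, sub_smul, h2, sub_self]
  -- the map ρ : B → Ω
  set ρ : B →ₗ[B] KaehlerDifferential A B :=
    LinearMap.toSpanSingleton B (KaehlerDifferential A B) (dd xh) with hρdef
  have hρapp : ∀ t : B, ρ t = t • dd xh := fun t => rfl
  have Dvxh : Dv xh = 1 := by
    have h1 := Dspec xh X 1 (by simp) (by rw [map_one, mul_one])
    simpa using h1
  set φ : KaehlerDifferential A B →ₗ[B] (B ⧸ J) := DBA.liftKaehlerDifferential with hφdef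
  have hφdx : φ (dd xh) = Submodule.Quotient.mk 1 := by
    rw [hφdef, hdddef, Derivation.liftKaehlerDifferential_comp_D]
    show J.mkQ (Dv xh) = _
    rw [Dvxh, Submodule.mkQ_apply]
  have hkerρ : LinearMap.ker ρ = J := by
    ext t
    constructor
    · intro ht
      have h1 : ρ t = 0 := ht
      have h2 := congrArg φ h1
      rw [hρapp, map_smul, hφdx, map_zero] at h2
      rw [← Submodule.Quotient.mk_smul, smul_eq_mul, mul_one] at h2
      exact (Submodule.Quotient.mk_eq_zero J).mp h2
    · intro ht
      obtain ⟨r, hr⟩ := Ideal.mem_span_singleton'.mp ht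
      show ρ t = 0
      rw [hρapp, ← hr, mul_smul, drel, smul_zero]
  have hsurjρ : Function.Surjective ρ := by
    have hsp : Submodule.span B {dd xh} = ⊤ := by
      rw [eq_top_iff, ← KaehlerDifferential.span_range_derivation A B]
      rw [Submodule.span_le]
      rintro _ ⟨z, rfl⟩
      obtain ⟨p, s, hs, hzs⟩ := rep z
      have h7 := congrArg dd hzs
      rw [Derivation.leibniz, dP s, dP p] at h7
      have h8 : algebraMap k[X] B s • dd z
          = algebraMap k[X] B (derivative p) • dd xh
            - z • (algebraMap k[X] B (derivative s) • dd xh) := by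
        rw [← h7]; abel
      obtain ⟨su, hsu⟩ := hu s hs
      have h9 : dd z = (↑su⁻¹ : B) • (algebraMap k[X] B s • dd z) := by
        rw [smul_smul, ← hsu, Units.inv_mul, one_smul]
      rw [h9, h8]
      refine Submodule.smul_mem _ _ (Submodule.sub_mem _ ?_ ?_)
      · exact Submodule.smul_mem _ _ (Submodule.mem_span_singleton_self _)
      · exact Submodule.smul_mem _ _
          (Submodule.smul_mem _ _ (Submodule.mem_span_singleton_self _))
    rw [← LinearMap.range_eq_top, hρdef, ← LinearMap.span_singleton_eq_range]
    exact hsp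
  -- factorization of δ
  set π : B := algebraMap k[X] B ((X : k[X]) - C c) with hπdef
  have hπev : ev π = 0 := by
    rw [hπdef, hev]
    simp
  have hπne : π ≠ 0 := by
    rw [hπdef]
    intro h0
    exact Polynomial.X_sub_C_ne_zero c (hinj (h0.trans (map_zero (algebraMap k[X] B)).symm))
  have hπnu : ¬ IsUnit π := by
    intro hup
    have := hup.map ev
    rw [hπev] at this
    exact not_isUnit_zero this
  have hnotspan : ∀ t : B, t ∉ Ideal.span {π} → IsUnit t := by
    intro t ht
    refine hunit' t fun h0 => ht ?_
    exact hker t h0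
  have hfac : ((X : k[X]) - C c) ^ n * (Δ /ₘ ((X - C c) ^ n)) = Δ := by
    rw [hndef]
    exact Polynomial.pow_mul_divByMonic_rootMultiplicity_eq Δ c
  have hu₀ : (Δ /ₘ ((X - C c) ^ n)).eval c ≠ 0 := by
    rw [hndef]
    exact Polynomial.eval_divByMonic_pow_rootMultiplicity_ne_zero c hΔ
  have hδπ : J = Ideal.span {π ^ n} := by
    rw [hJdef]
    have : δb = π ^ n * algebraMap k[X] B (Δ /ₘ ((X - C c) ^ n)) := by
      rw [hδbdef, hπdef, ← map_pow, ← map_mul, hfac]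
    rw [this]
    exact Ideal.span_singleton_mul_right_unit (hu _ hu₀) _
  -- the covering lemma for powers of π
  have hcov : ∀ j : ℕ, (Ideal.span {π ^ (j + 1)} : Ideal B) ⋖ Ideal.span {π ^ j} := by
    intro j
    constructor
    · refine lt_of_le_of_ne
        (Ideal.span_singleton_le_span_singleton.mpr (pow_dvd_pow π (Nat.le_succ j))) fun heq => ?_
      have hm : π ^ j ∈ (Ideal.span {π ^ (j + 1)} : Ideal B) := by
        rw [heq]
        exact Ideal.subset_span rfl
      obtain ⟨t, ht⟩ := Ideal.mem_span_singleton'.mp hm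
      have h1 : π ^ j * (t * π) = π ^ j * 1 := by linear_combination ht
      have h2 : t * π = 1 := mul_left_cancel₀ (pow_ne_zero j hπne) h1
      exact hπnu (IsUnit.of_mul_eq_one (a := π) t (by rw [mul_comm]; exact h2))
    · intro W hW1 hW2
      obtain ⟨x, hxW, hxns⟩ := SetLike.exists_of_lt hW1
      have hxj : x ∈ Ideal.span {π ^ j} := hW2.le hxW
      obtain ⟨t, ht⟩ := Ideal.mem_span_singleton'.mp hxj
      have htn : t ∉ Ideal.span {π} := by
        intro hmem
        obtain ⟨r, hr⟩ := Ideal.mem_span_singleton'.mp hmem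
        refine hxns (Ideal.mem_span_singleton'.mpr ⟨r, ?_⟩)
        rw [← ht, ← hr, pow_succ]
        ring
      obtain ⟨tu, htu⟩ := hnotspan t htn
      have hπjW : π ^ j ∈ W := by
        have h3 : (↑tu⁻¹ : B) • x ∈ W := W.smul_mem _ hxW
        have h4 : (↑tu⁻¹ : B) • x = π ^ j := by
          rw [smul_eq_mul, ← ht, ← htu]
          calc (↑tu⁻¹ : B) * (↑tu * π ^ j) = (↑tu⁻¹ * ↑tu) * π ^ j := by ring
            _ = π ^ j := by rw [Units.inv_mul, one_mul]
        rwa [h4] at h3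
      exact hW2.2 (Ideal.span_le.mpr (Set.singleton_subset_iff.mpr hπjW))
  -- transporting covers through ρ
  have hmapcov : ∀ p q : Submodule B B, LinearMap.ker ρ ≤ p → p ⋖ q →
      (Submodule.map ρ p) ⋖ (Submodule.map ρ q) := by
    intro p q hkp hpq
    have hlt : Submodule.map ρ p < Submodule.map ρ q := by
      refine lt_of_le_of_ne (Submodule.map_mono hpq.1.le) fun heq => ?_
      have hqp : q ≤ p := by
        calc q ≤ Submodule.comap ρ (Submodule.map ρ q) := Submodule.le_comap_map _ _
          _ = Submodule.comap ρ (Submodule.map ρ p) := by rw [heq]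
          _ = p ⊔ LinearMap.ker ρ := Submodule.comap_map_eq _ _
          _ = p := sup_eq_left.mpr hkp
      exact hpq.1.2 hqp
    refine ⟨hlt, fun W hW1 hW2 => ?_⟩
    have h1 : p < Submodule.comap ρ W := by
      refine lt_of_le_of_ne
        (le_trans (Submodule.le_comap_map _ _) (Submodule.comap_mono hW1.le)) fun heq => ?_
      have h2 := Submodule.map_comap_eq_of_surjective hsurjρ W
      rw [← heq] at h2
      exact hW1.ne h2
    have h3 : Submodule.comap ρ W < q := by
      refine lt_of_le_of_ne ?_ fun heq => ?_
      · calc Submodule.comap ρ W ≤ Submodule.comap ρ (Submodule.map ρ q) :=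
              Submodule.comap_mono hW2.le
          _ = q ⊔ LinearMap.ker ρ := Submodule.comap_map_eq _ _
          _ = q := sup_eq_left.mpr (le_trans hkp hpq.1.le)
      · have h4 := Submodule.map_comap_eq_of_surjective hsurjρ W
        rw [heq] at h4
        exact hW2.ne' h4
    exact hpq.2 h1 h3
  -- the composition series
  refine ⟨⟨n, fun i => Submodule.map ρ (Ideal.span {π ^ (n - (i : ℕ))}), ?_⟩, ?_, ?_, rfl⟩
  · intro i
    show JordanHolderLattice.IsMaximal (Submodule.map ρ (Ideal.span {π ^ (n - ((Fin.castSucc i : Fin (n + 1)) : ℕ))}))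
      (Submodule.map ρ (Ideal.span {π ^ (n - ((Fin.succ i : Fin (n + 1)) : ℕ))}))
    simp only [Fin.coe_castSucc, Fin.val_succ]
    have hexp : n - (i : ℕ) = (n - ((i : ℕ) + 1)) + 1 := by omega
    rw [hexp]
    refine hmapcov _ _ ?_ (hcov _)
    rw [hkerρ, hδπ]
    exact Ideal.span_singleton_le_span_singleton.mpr (pow_dvd_pow _ (by omega))
  · show Submodule.map ρ (Ideal.span {π ^ (n - ((0 : Fin (n + 1)) : ℕ))}) = ⊥
    rw [show ((0 : Fin (n + 1)) : ℕ) = 0 from rfl, Nat.sub_zero, ← hδπ, ← hkerρ]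
    rw [eq_bot_iff]
    rintro ω ⟨t, htk, rfl⟩
    simpa using htk
  · show Submodule.map ρ (Ideal.span {π ^ (n - ((Fin.last n : Fin (n + 1)) : ℕ))}) = ⊤
    rw [show ((Fin.last n : Fin (n + 1)) : ℕ) = n from rfl, Nat.sub_self, pow_zero,
      Ideal.span_singleton_one, Submodule.map_top, LinearMap.range_eq_top]
    exact hsurjρ
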